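/- arXiv:0810.2656 — 3 statements merged into one kernel-verified Lean document; each statement's English description precedes it below -/
import Mathlib

section
/- For non-commuting indeterminates X and Y, the homogeneous component of degree 2 of log(e^X e^Y) equals (1/2)[X,Y], where [X,Y] = XY - YX. -/
/- Formal BCH series in the free associative algebra on two non-commuting
variables over ℚ.  A grading variable `t` (the polynomial variable) is used to
extract homogeneous components: the degree-`m` homogeneous component of
`log(e^X e^Y)` is the coefficient of `t^m` in the (sufficiently truncated)
composition of the exponential and logarithm series applied to `t•X`, `t•Y`. -/

noncomputable section

abbrev FA : Type := FreeAlgebra ℚ (Fin 2)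

def Xg : FA := FreeAlgebra.ι ℚ 0
def Yg : FA := FreeAlgebra.ι ℚ 1

/-- Truncated exponential series `∑_{n ≤ N} a^n / n!`. -/
def texp {R : Type*} [Ring R] [Algebra ℚ R] (N : ℕ) (a : R) : R :=
  ∑ n ∈ Finset.range (N + 1), ((n.factorial : ℚ)⁻¹) • a ^ n

/-- Truncated logarithm series `∑_{1 ≤ k ≤ N} (-1)^(k-1) (p-1)^k / k`. -/
def tlog {R : Type*} [Ring R] [Algebra ℚ R] (N : ℕ) (p : R) : R :=
  ∑ k ∈ Finset.range N, (((-1 : ℚ) ^ k) / (k + 1)) • (p - 1) ^ (k + 1)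

def gX : Polynomial FA := Polynomial.C Xg * Polynomial.X
def gY : Polynomial FA := Polynomial.C Yg * Polynomial.X

open Polynomial in
lemma texp_coeff (a : FA) (N k : ℕ) (hk : k ≤ N) :
    (texp N (Polynomial.C a * Polynomial.X)).coeff k = (k.factorial : ℚ)⁻¹ • a ^ k := by
  unfold texp
  rw [Polynomial.finset_sum_coeff]
  have key : ∀ n : ℕ, ((((n.factorial : ℚ)⁻¹) • (C a * X) ^ n).coeff k)
      = if n = k then (k.factorial : ℚ)⁻¹ • a ^ k else 0 := by
    intro n
    have h1 : (C a * X) ^ n = C (a ^ n) * X ^ n := by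
      rw [(Polynomial.commute_X (C a)).symm.mul_pow, ← Polynomial.C_pow]
    rw [Polynomial.coeff_smul, h1, Polynomial.coeff_C_mul, Polynomial.coeff_X_pow]
    by_cases h : n = k <;> simp [h, Ne.symm]
  rw [Finset.sum_congr rfl (fun n _ => key n), Finset.sum_ite_eq' (Finset.range (N+1)) k]
  simp [Nat.lt_succ_of_le hk]

/-- the homogeneous component of degree 2 of `log(e^X e^Y)`
equals `(1/2)[X,Y]`, where `[X,Y] = XY - YX`. -/
theorem bch_degree_two :
    ∀ N : ℕ, 2 ≤ N →
      (tlog N (texp N gX * texp N gY)).coeff 2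
        = (1 / 2 : ℚ) • (Xg * Yg - Yg * Xg) := by
  intro N hN
  set q : Polynomial FA := texp N gX * texp N gY with hq
  have hx0 : (texp N gX).coeff 0 = 1 := by
    simpa [gX] using texp_coeff Xg N 0 (by omega)
  have hx1 : (texp N gX).coeff 1 = Xg := by
    simpa [gX] using texp_coeff Xg N 1 (by omega)
  have hx2 : (texp N gX).coeff 2 = (2:ℚ)⁻¹ • (Xg * Xg) := by
    have := texp_coeff Xg N 2 (by omega)
    simpa [gX, pow_two, Nat.factorial] using this
  have hy0 : (texp N gY).coeff 0 = 1 := by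
    simpa [gY] using texp_coeff Yg N 0 (by omega)
  have hy1 : (texp N gY).coeff 1 = Yg := by
    simpa [gY] using texp_coeff Yg N 1 (by omega)
  have hy2 : (texp N gY).coeff 2 = (2:ℚ)⁻¹ • (Yg * Yg) := by
    have := texp_coeff Yg N 2 (by omega)
    simpa [gY, pow_two, Nat.factorial] using this
  have hq0 : q.coeff 0 = 1 := by
    rw [hq, Polynomial.mul_coeff_zero, hx0, hy0, one_mul]
  have hq1 : q.coeff 1 = Xg + Yg := by
    rw [hq, Polynomial.coeff_mul,
      Finset.Nat.sum_antidiagonal_eq_sum_range_succ_mk]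
    simp [Finset.sum_range_succ, hx0, hx1, hy0, hy1, add_comm]
  have hq2 : q.coeff 2 = (2:ℚ)⁻¹ • (Xg * Xg) + Xg * Yg + (2:ℚ)⁻¹ • (Yg * Yg) := by
    rw [hq, Polynomial.coeff_mul,
      Finset.Nat.sum_antidiagonal_eq_sum_range_succ_mk]
    simp [Finset.sum_range_succ, hx0, hx1, hx2, hy0, hy1, hy2]
    abel
  -- coefficients of q - 1
  have hp0 : (q - 1).coeff 0 = 0 := by simp [hq0]
  have hp1 : (q - 1).coeff 1 = Xg + Yg := by simp [hq1, Polynomial.coeff_one]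
  have hp2 : (q - 1).coeff 2 = q.coeff 2 := by simp [Polynomial.coeff_one]
  -- higher powers vanish in degree 2
  have hhigh : ∀ k : ℕ, 2 ≤ k → (((q - 1)) ^ (k + 1)).coeff 2 = 0 := by
    intro k hk
    obtain ⟨g, hg⟩ := Polynomial.X_dvd_iff.mpr hp0
    have : (q - 1) ^ (k + 1) = Polynomial.X ^ (k+1) * g ^ (k+1) := by
      rw [hg]; exact (Polynomial.commute_X g).mul_pow _
    rw [this, Polynomial.coeff_X_pow_mul']
    simp [Nat.not_succ_le_self, show ¬ (k + 1 ≤ 2) by omega]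
  have hsq : ((q - 1) ^ 2).coeff 2
      = (Xg + Yg) * (Xg + Yg) := by
    rw [pow_two, Polynomial.coeff_mul,
      Finset.Nat.sum_antidiagonal_eq_sum_range_succ_mk]
    simp [Finset.sum_range_succ, Polynomial.coeff_one, hq0, hq1]
  -- now compute the tlog coefficient
  unfold tlog
  rw [Polynomial.finset_sum_coeff]
  have hsub : Finset.range 2 ⊆ Finset.range N := by
    intro x hx; simp at hx ⊢; omega
  rw [← Finset.sum_subset hsub (by
    intro k hk hk2
    simp only [Finset.mem_range] at hk hk2
    rw [Polynomial.coeff_smul, hhigh k (by omega), smul_zero])]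
  rw [Finset.sum_range_succ, Finset.sum_range_succ, Finset.sum_range_zero]
  rw [Polynomial.coeff_smul, Polynomial.coeff_smul, pow_one, hp2, hsq, hq2]
  simp only [pow_zero, pow_one]
  rw [mul_add, add_mul, add_mul]
  simp only [smul_add, smul_sub, smul_smul]
  norm_num
  module
end
end

section
/- Let X = [[α,0],[0,−α]] and Y = [[0,β],[0,0]] be 2×2 complex matrices with 0 < |α| < π, α ≠ 0. Then log(e^X e^Y) = X + (2α/(1 − e^{−2α})) Y, i.e., exp(X + (2α/(1 − e^{−2α})) Y) = e^X e^Y. -/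
open Matrix

noncomputable section

lemma exp_of_sq_zero (Y : Matrix (Fin 2) (Fin 2) ℂ) (h : Y * Y = 0) :
    NormedSpace.exp Y = 1 + Y := by
  rw [NormedSpace.exp_eq_tsum (𝕂 := ℂ)]
  show (∑' n : ℕ, ((n.factorial : ℕ) : ℂ)⁻¹ • Y ^ n) = 1 + Y
  have hzero : ∀ k ∉ Finset.range 2, (((k.factorial : ℕ) : ℂ)⁻¹ • Y ^ k) = 0 := by
    intro k hk
    have hk2 : 2 ≤ k := by simp at hk; omega
    have hY2 : Y ^ 2 = 0 := by rw [pow_two]; exact h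
    have : Y ^ k = 0 := by
      calc Y ^ k = Y ^ 2 * Y ^ (k - 2) := by rw [← pow_add]; congr 1; omega
        _ = 0 := by rw [hY2, zero_mul]
    rw [this, smul_zero]
  rw [tsum_eq_sum hzero]
  simp [Finset.sum_range_succ, Nat.factorial]

/-- for `X = [[α,0],[0,−α]]`, `Y = [[0,β],[0,0]]` (2×2 complex
matrices) with `α ≠ 0` and `0 < |α| < π`, one has
`log(e^X e^Y) = X + (2α/(1 − e^{−2α})) Y`, i.e.
`exp(X + (2α/(1 − e^{−2α})) Y) = e^X e^Y`. -/
theorem bch_two_by_two_closed_form (α β : ℂ) (hα : α ≠ 0)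
    (h0 : 0 < ‖α‖) (hπ : ‖α‖ < Real.pi) :
    NormedSpace.exp
        (!![α, 0; 0, -α] + (2 * α / (1 - Complex.exp (-2 * α))) • !![0, β; 0, 0])
      = NormedSpace.exp !![α, 0; 0, -α] * NormedSpace.exp !![0, β; 0, 0] := by
  have h1 : Complex.exp (-2 * α) ≠ 1 := by
    intro h
    obtain ⟨n, hn⟩ := Complex.exp_eq_one_iff.mp h
    have hαn : α = -(n * (Real.pi : ℂ) * Complex.I) := by
      have : (-2 : ℂ) ≠ 0 := by norm_num
      field_simp at hn ⊢
      linear_combination -hn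
    have habs : ‖α‖ = |(n : ℝ)| * Real.pi := by
      rw [hαn]
      simp [abs_mul, Complex.norm_intCast, abs_of_pos Real.pi_pos]
    rw [habs] at hπ
    have hn0 : n = 0 := by
      by_contra hne
      have : (1 : ℝ) ≤ |(n : ℝ)| := by
        rw [← Int.cast_abs]
        exact_mod_cast Int.one_le_abs (by simpa using hne)
      nlinarith [Real.pi_pos]
    rw [hn0] at hαn
    simp at hαn
    exact hα hαn
  have hden : (1 : ℂ) - Complex.exp (-2 * α) ≠ 0 := sub_ne_zero.mpr (Ne.symm h1)
  set c : ℂ := 2 * α / (1 - Complex.exp (-2 * α)) with hc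
  set t : ℂ := -β / (1 - Complex.exp (-2 * α)) with ht
  -- the conjugating unit
  have hAinv : !![(1:ℂ), t; 0, 1] * !![(1:ℂ), -t; 0, 1] = 1 ∧
      !![(1:ℂ), -t; 0, 1] * !![(1:ℂ), t; 0, 1] = 1 := by
    constructor <;> · rw [Matrix.mul_fin_two] <;> simp [Matrix.one_fin_two] <;> ring_nf
  set U : (Matrix (Fin 2) (Fin 2) ℂ)ˣ :=
    ⟨!![(1:ℂ), t; 0, 1], !![(1:ℂ), -t; 0, 1], hAinv.1, hAinv.2⟩ with hU
  have hM : !![α, 0; 0, -α] + c • !![0, β; 0, 0]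
      = (U : Matrix (Fin 2) (Fin 2) ℂ) * Matrix.diagonal ![α, -α] * ((U⁻¹ : _ˣ) : Matrix (Fin 2) (Fin 2) ℂ) := by
    show _ = !![(1:ℂ), t; 0, 1] * Matrix.diagonal ![α, -α] * !![(1:ℂ), -t; 0, 1]
    rw [show (Matrix.diagonal ![α, -α] : Matrix (Fin 2) (Fin 2) ℂ) = !![α, 0; 0, -α] by
      ext i j; fin_cases i <;> fin_cases j <;> simp [Matrix.diagonal]]
    rw [Matrix.mul_fin_two, Matrix.mul_fin_two]
    ext i j
    fin_cases i <;> fin_cases j <;>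
      simp [Matrix.smul_apply, ht, hc] <;> field_simp <;> ring
  have hdiag : NormedSpace.exp (Matrix.diagonal ![α, -α])
      = Matrix.diagonal ![Complex.exp α, Complex.exp (-α)] := by
    rw [Matrix.exp_diagonal]
    ext i j
    fin_cases i <;> fin_cases j <;>
      simp [Matrix.diagonal_apply, Complex.exp_eq_exp_ℂ]
  have hX : NormedSpace.exp !![α, 0; 0, -α] = !![Complex.exp α, 0; 0, Complex.exp (-α)] := by
    rw [show !![α, 0; 0, -α] = (Matrix.diagonal ![α, -α] : Matrix (Fin 2) (Fin 2) ℂ) by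
      ext i j; fin_cases i <;> fin_cases j <;> simp [Matrix.diagonal]]
    rw [hdiag]
    ext i j; fin_cases i <;> fin_cases j <;> simp [Matrix.diagonal]
  have hY : NormedSpace.exp !![(0:ℂ), β; 0, 0] = 1 + !![(0:ℂ), β; 0, 0] := by
    apply exp_of_sq_zero
    ext i j
    fin_cases i <;> fin_cases j <;> simp [Matrix.mul_apply, Fin.sum_univ_two]
  rw [hM, Matrix.exp_units_conj, hdiag, hX, hY]
  show !![(1:ℂ), t; 0, 1] * _ * !![(1:ℂ), -t; 0, 1] = _
  have hexp : Complex.exp α - Complex.exp (-α) = Complex.exp α * (1 - Complex.exp (-2 * α)) := by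
    rw [mul_sub, mul_one, ← Complex.exp_add]
    ring_nf
  rw [show (Matrix.diagonal ![Complex.exp α, Complex.exp (-α)] : Matrix (Fin 2) (Fin 2) ℂ)
      = !![Complex.exp α, 0; 0, Complex.exp (-α)] by
    ext i j; fin_cases i <;> fin_cases j <;> simp [Matrix.diagonal]]
  rw [Matrix.mul_fin_two, Matrix.mul_fin_two]
  ext i j
  fin_cases i <;> fin_cases j <;>
    simp [Matrix.mul_apply, Fin.sum_univ_two, Matrix.one_apply, ht, hc] <;>
    field_simp <;>
    (simp only [show -(2*α) = -2*α by ring]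
     rw [div_eq_iff hden]
     linear_combination β * hexp)
end
end

section
/- Let Z = ∑_m Z_m = log(e^X e^Y) and W = ∑_m W_m = log(e^{X/2} e^Y e^{X/2}) in the completed free Lie algebra on X and Y, where W_{2j} = 0 for all j ≥ 1. Then for every p ≥ 1: Z_{2p+1} = W_{2p+1} + ∑_{j=1}^{p} (1/((2j)! 2^{2j})) ad_X^{2j} W_{2p−2j+1}, and Z_{2p} = ∑_{j=1}^{p} (1/((2j−1)! 2^{2j−1})) ad_X^{2j−1} W_{2p−2j+1}. -/
/- Formal BCH series in the free associative algebra on two non-commuting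
variables over ℚ.  A grading variable `t` (the polynomial variable) is used to
extract homogeneous components: the degree-`m` homogeneous component of
`log(e^X e^Y)` is the coefficient of `t^m` in the (sufficiently truncated)
composition of the exponential and logarithm series applied to `t•X`, `t•Y`. -/

noncomputable section

/-- The degree-`m` homogeneous component `Z_m` of the BCH series
`Z = log(e^X e^Y)`. -/
def Zc (m : ℕ) : FA := (tlog m (texp m gX * texp m gY)).coeff m

/-- The degree-`m` homogeneous component `W_m` of the symmetric BCH series
`W = log(e^{X/2} e^Y e^{X/2})`. -/
def Wc (m : ℕ) : FA :=
  (tlog m (texp m ((1 / 2 : ℚ) • gX) * texp m gY *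
      texp m ((1 / 2 : ℚ) • gX))).coeff m

open Polynomial Finset
set_option linter.unusedSectionVars false
set_option linter.unusedVariables false
set_option maxHeartbeats 1000000

open Polynomial Finset
set_option linter.unusedSectionVars false

variable {R : Type*} [Ring R] [Algebra ℚ R]

/-- congruence mod `X^n` in `R[X]`. -/
def MD (n : ℕ) (p q : R[X]) : Prop := (X : R[X])^n ∣ (p - q)

namespace MD

lemma refl (n : ℕ) (p : R[X]) : MD n p p := by simp [MD, sub_self]

lemma symm {n : ℕ} {p q : R[X]} (h : MD n p q) : MD n q p := by
  have := dvd_neg.2 h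
  simpa [MD, neg_sub] using this

lemma trans {n : ℕ} {p q r : R[X]} (h : MD n p q) (h' : MD n q r) : MD n p r := by
  have := dvd_add h h'
  simpa [MD, sub_add_sub_cancel] using this

lemma add {n : ℕ} {p q r s : R[X]} (h : MD n p q) (h' : MD n r s) :
    MD n (p + r) (q + s) := by
  have := dvd_add h h'
  simpa [MD, add_sub_add_comm] using this

lemma dvd_mul_left' {n : ℕ} {a p : R[X]} (h : (X:R[X])^n ∣ a) : (X:R[X])^n ∣ p * a := by
  obtain ⟨c, rfl⟩ := h
  exact ⟨p * c, by rw [← mul_assoc, ← X_pow_mul, mul_assoc]⟩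

lemma dvd_mul_right' {n : ℕ} {a p : R[X]} (h : (X:R[X])^n ∣ a) : (X:R[X])^n ∣ a * p := by
  obtain ⟨c, rfl⟩ := h
  exact ⟨c * p, by rw [mul_assoc]⟩

lemma mul {n : ℕ} {p q r s : R[X]} (h : MD n p q) (h' : MD n r s) :
    MD n (p * r) (q * s) := by
  have e : p * r - q * s = p * (r - s) + (p - q) * s := by noncomm_ring
  unfold MD at *
  rw [e]
  exact dvd_add (dvd_mul_left' h') (dvd_mul_right' h)

lemma pow {n : ℕ} {p q : R[X]} (h : MD n p q) : ∀ k, MD n (p ^ k) (q ^ k)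
  | 0 => by simpa using refl n 1
  | (k+1) => by
      rw [pow_succ, pow_succ]; exact (pow h k).mul h

lemma smul {n : ℕ} {p q : R[X]} (c : ℚ) (h : MD n p q) : MD n (c • p) (c • q) := by
  unfold MD at *
  obtain ⟨d, hd⟩ := h
  exact ⟨c • d, by rw [← smul_sub, hd, mul_smul_comm]⟩

lemma sum {n : ℕ} {ι : Type*} (s : Finset ι) (f g : ι → R[X])
    (h : ∀ i ∈ s, MD n (f i) (g i)) : MD n (∑ i ∈ s, f i) (∑ i ∈ s, g i) := by
  unfold MD at *
  rw [← Finset.sum_sub_distrib]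
  exact Finset.dvd_sum h

lemma coeff {n : ℕ} {p q : R[X]} (h : MD n p q) {d : ℕ} (hd : d < n) :
    p.coeff d = q.coeff d := by
  have := Polynomial.X_pow_dvd_iff.1 h d hd
  rw [Polynomial.coeff_sub, sub_eq_zero] at this
  exact this

lemma of_le {n m : ℕ} {p q : R[X]} (h : MD n p q) (hmn : m ≤ n) : MD m p q :=
  dvd_trans (pow_dvd_pow (X:R[X]) hmn) h

lemma zero_of_dvd {n k : ℕ} {a : R[X]} (h : (X:R[X]) ∣ a) (hnk : n ≤ k) :
    MD n (a ^ k) 0 := by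
  unfold MD
  rw [sub_zero]
  obtain ⟨c, rfl⟩ := h
  have h1 : (X:R[X])^n ∣ (X*c)^n := by
    refine ⟨c^n, ?_⟩
    rw [Commute.mul_pow (Polynomial.commute_X c) n]
  exact h1.trans (pow_dvd_pow _ hnk)

end MD

section TexpTlog
variable {R : Type*} [Ring R] [Algebra ℚ R]

lemma texp_zero (N : ℕ) : texp N (0 : R[X]) = 1 := by
  unfold texp
  rw [Finset.sum_eq_single 0]
  · simp
  · intro n _ hn
    rw [zero_pow hn, smul_zero]
  · intro h; simp at h

lemma texp_sub_one_dvd {a : R[X]} (h : (X:R[X]) ∣ a) (N : ℕ) :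
    (X:R[X]) ∣ (texp N a - 1) := by
  unfold texp
  rw [Finset.sum_range_succ' ]
  simp only [pow_zero, Nat.factorial_zero, Nat.cast_one, inv_one, one_smul, add_sub_cancel_right]
  refine Finset.dvd_sum ?_
  intro i _
  obtain ⟨c, rfl⟩ := h
  have hx : (X:R[X]) ∣ (X*c)^(i+1) := ⟨c * (X*c)^i, by rw [pow_succ', mul_assoc]⟩
  obtain ⟨d, hd⟩ := hx
  exact ⟨((i+1).factorial : ℚ)⁻¹ • d, by rw [hd, mul_smul_comm]⟩

lemma dvd_texp_term {a : R[X]} (h : (X:R[X]) ∣ a) {n d : ℕ} (hd : d ≤ n) :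
    (X:R[X])^d ∣ a ^ n := by
  have h1 : (X:R[X])^d ∣ a^d := by
    obtain ⟨c, rfl⟩ := h
    exact ⟨c^d, by rw [Commute.mul_pow (Polynomial.commute_X c) d]⟩
  exact h1.trans (pow_dvd_pow a hd)

lemma texp_stable {a : R[X]} (h : (X:R[X]) ∣ a) {d N : ℕ} (hdN : d ≤ N) :
    MD (d+1) (texp N a) (texp d a) := by
  unfold MD texp
  rw [← Finset.sum_range_add_sum_Ico _ (Nat.succ_le_succ hdN), add_sub_cancel_left]
  refine Finset.dvd_sum ?_
  intro n hn
  rw [Finset.mem_Ico] at hn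
  have : (X:R[X])^(d+1) ∣ a^n := dvd_texp_term h hn.1
  obtain ⟨c, hc⟩ := this
  exact ⟨(n.factorial : ℚ)⁻¹ • c, by rw [hc, mul_smul_comm]⟩

lemma tlog_congr {K N : ℕ} {p q : R[X]} (h : MD K p q) : MD K (tlog N p) (tlog N q) := by
  unfold tlog
  refine MD.sum _ _ _ ?_
  intro k _
  refine MD.smul _ ?_
  exact (h.add (MD.refl K (-1))).pow _

lemma tlog_stable {p : R[X]} (h : (X:R[X]) ∣ (p - 1)) {d N : ℕ} (hdN : d ≤ N) :
    MD (d+1) (tlog N p) (tlog d p) := by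
  unfold MD tlog
  rw [← Finset.sum_range_add_sum_Ico _ hdN, add_sub_cancel_left]
  refine Finset.dvd_sum ?_
  intro k hk
  rw [Finset.mem_Ico] at hk
  have : (X:R[X])^(d+1) ∣ (p-1)^(k+1) := dvd_texp_term h (Nat.succ_le_succ hk.1)
  obtain ⟨c, hc⟩ := this
  exact ⟨((-1:ℚ)^k / (k+1)) • c, by rw [hc, mul_smul_comm]⟩

lemma tlog_conj {K N : ℕ} {g h p : R[X]} (hgh : MD K (g * h) 1) (hhg : MD K (h * g) 1) :
    MD K (tlog N (g * p * h)) (g * tlog N p * h) := by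
  have e1 : MD K (g * p * h - 1) (g * (p - 1) * h) := by
    unfold MD at hgh ⊢
    have e : (g * p * h - 1) - (g * (p - 1) * h) = g * h - 1 := by noncomm_ring
    rw [e]; exact hgh
  have key : ∀ k : ℕ, MD K ((g * p * h - 1)^(k+1)) (g * (p - 1)^(k+1) * h) := by
    intro k
    induction k with
    | zero => simpa only [zero_add, pow_one] using e1
    | succ k ih =>
        rw [pow_succ]
        refine (ih.mul e1).trans ?_
        have e : (g * (p-1)^(k+1) * h) * (g * (p - 1) * h)
            = (g * (p-1)^(k+1)) * (h * g) * ((p - 1) * h) := by noncomm_ring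
        rw [e]
        refine (((MD.refl K (g * (p-1)^(k+1))).mul hhg).mul (MD.refl K ((p-1)*h))).trans ?_
        have e2 : (g * (p-1)^(k+1)) * 1 * ((p - 1) * h) = g * (p - 1)^(k+1+1) * h := by
          rw [pow_succ]; noncomm_ring
        rw [e2]; exact MD.refl _ _
  unfold tlog
  have e3 : g * (∑ k ∈ Finset.range N, ((-1:ℚ)^k / (k+1)) • (p - 1)^(k+1)) * h
      = ∑ k ∈ Finset.range N, ((-1:ℚ)^k / (k+1)) • (g * (p - 1)^(k+1) * h) := by
    rw [Finset.mul_sum, Finset.sum_mul]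
    refine Finset.sum_congr rfl ?_
    intro k _
    rw [mul_smul_comm, smul_mul_assoc]
  rw [e3]
  exact MD.sum _ _ _ (fun k _ => MD.smul _ (key k))
end TexpTlog

section TexpMul
variable {R : Type*} [Ring R] [Algebra ℚ R]

lemma sum_range_antidiagonal {β : Type*} [AddCommMonoid β] (m : ℕ) (F : ℕ → ℕ → β) :
    ∑ k ∈ Finset.range (m+1), ∑ p ∈ antidiagonal k, F p.1 p.2
    = ∑ p ∈ (Finset.range (m+1) ×ˢ Finset.range (m+1)).filter (fun p => p.1 + p.2 ≤ m),
        F p.1 p.2 := by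
  rw [← Finset.sum_biUnion]
  · apply Finset.sum_congr _ (fun _ _ => rfl)
    ext ⟨i, j⟩
    simp only [Finset.mem_biUnion, Finset.mem_range, Finset.HasAntidiagonal.mem_antidiagonal,
      Finset.mem_filter, Finset.mem_product]
    constructor
    · rintro ⟨k, hk, rfl⟩; omega
    · rintro ⟨⟨hi, hj⟩, hij⟩; exact ⟨i + j, by omega, rfl⟩
  · intro x hx y hy hxy
    simp only [Finset.disjoint_left, Finset.HasAntidiagonal.mem_antidiagonal]
    rintro ⟨i, j⟩ h1 h2
    exact hxy (h1 ▸ h2)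

lemma dvd_mul_pow {n m : ℕ} {u v : R[X]} (hu : (X:R[X])^n ∣ u) (hv : (X:R[X])^m ∣ v) :
    (X:R[X])^(n+m) ∣ u * v := by
  obtain ⟨c, rfl⟩ := hu
  obtain ⟨d, rfl⟩ := hv
  refine ⟨c * d, ?_⟩
  calc X^n * c * (X^m * d) = X^n * (c * X^m) * d := by noncomm_ring
    _ = X^n * (X^m * c) * d := by rw [← X_pow_mul]
    _ = X^(n+m) * (c * d) := by rw [pow_add]; noncomm_ring

lemma dvd_smul' {K : ℕ} {w : R[X]} (c : ℚ) (h : (X:R[X])^K ∣ w) : (X:R[X])^K ∣ c • w := by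
  obtain ⟨d, hd⟩ := h
  exact ⟨c • d, by rw [hd, mul_smul_comm]⟩

lemma texp_mul {N : ℕ} {a b : R[X]} (hab : Commute a b) (ha : (X:R[X]) ∣ a)
    (hb : (X:R[X]) ∣ b) :
    MD (N+1) (texp N a * texp N b) (texp N (a+b)) := by
  unfold texp
  rw [Finset.sum_mul_sum, ← Finset.sum_product']
  rw [← Finset.sum_filter_add_sum_filter_not (Finset.range (N+1) ×ˢ Finset.range (N+1))
      (fun p => p.1 + p.2 ≤ N)]
  have E : ∑ p ∈ (Finset.range (N+1) ×ˢ Finset.range (N+1)).filter (fun p => p.1 + p.2 ≤ N),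
        ((p.1.factorial : ℚ)⁻¹ • a ^ p.1) * ((p.2.factorial : ℚ)⁻¹ • b ^ p.2)
      = ∑ n ∈ Finset.range (N + 1), ((n.factorial : ℚ)⁻¹) • (a+b) ^ n := by
    rw [← sum_range_antidiagonal N
      (fun i j => ((i.factorial : ℚ)⁻¹ • a ^ i) * ((j.factorial : ℚ)⁻¹ • b ^ j))]
    refine Finset.sum_congr rfl ?_
    intro n _
    rw [Finset.Nat.sum_antidiagonal_eq_sum_range_succ
      (fun i j => ((i.factorial : ℚ)⁻¹ • a ^ i) * ((j.factorial : ℚ)⁻¹ • b ^ j))]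
    rw [hab.add_pow, Finset.smul_sum]
    refine Finset.sum_congr rfl ?_
    intro i hi
    rw [Finset.mem_range] at hi
    have hin : i ≤ n := Nat.lt_succ_iff.1 hi
    rw [smul_mul_assoc, mul_smul_comm, smul_smul]
    have : a ^ i * b ^ (n - i) * (n.choose i : R[X])
        = ((n.choose i : ℚ)) • (a ^ i * b ^ (n - i)) := by
      rw [(Nat.cast_commute (n.choose i) (a ^ i * b ^ (n - i))).symm.eq]
      rw [← nsmul_eq_mul, ← Nat.cast_smul_eq_nsmul ℚ]
    rw [this, smul_smul]
    congr 1
    rw [Nat.cast_choose ℚ hin]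
    field_simp
  have h2 : MD (N+1)
      (∑ p ∈ (Finset.range (N+1) ×ˢ Finset.range (N+1)).filter (fun p => ¬ p.1 + p.2 ≤ N),
        ((p.1.factorial : ℚ)⁻¹ • a ^ p.1) * ((p.2.factorial : ℚ)⁻¹ • b ^ p.2)) 0 := by
    rw [show (0 : R[X]) = ∑ _p ∈ (Finset.range (N+1) ×ˢ Finset.range (N+1)).filter
        (fun p => ¬ p.1 + p.2 ≤ N), (0:R[X]) from (Finset.sum_const_zero).symm]
    refine MD.sum _ _ _ ?_
    rintro ⟨i, j⟩ hp
    simp only [Finset.mem_filter, Finset.mem_product, Finset.mem_range, not_le] at hp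
    unfold MD
    rw [sub_zero, smul_mul_assoc, mul_smul_comm, smul_smul]
    refine dvd_smul' _ ?_
    have : (X:R[X])^(i+j) ∣ a^i * b^j :=
      dvd_mul_pow (dvd_texp_term ha le_rfl) (dvd_texp_term hb le_rfl)
    exact (pow_dvd_pow (X:R[X]) (by omega : N+1 ≤ i+j)).trans this
  refine MD.trans (MD.add (MD.refl (N+1)
      (∑ p ∈ (Finset.range (N+1) ×ˢ Finset.range (N+1)).filter (fun p => p.1 + p.2 ≤ N),
        ((p.1.factorial : ℚ)⁻¹ • a ^ p.1) * ((p.2.factorial : ℚ)⁻¹ • b ^ p.2))) h2) ?_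
  rw [add_zero, E]
  exact MD.refl _ _

lemma texp_inv {N : ℕ} {a : R[X]} (ha : (X:R[X]) ∣ a) :
    MD (N+1) (texp N a * texp N (-a)) 1 := by
  have h := texp_mul (N:=N) (Commute.neg_right (Commute.refl a)) ha ((dvd_neg).2 ha)
  rw [add_neg_cancel, texp_zero] at h
  exact h
end TexpMul

section Helpers
variable {R : Type*} [Ring R] [Algebra ℚ R]
lemma dvd_smul2 {u w : R[X]} (c : ℚ) (h : u ∣ w) : u ∣ c • w := by
  obtain ⟨d, hd⟩ := h
  exact ⟨c • d, by rw [hd, mul_smul_comm]⟩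
end Helpers

section Universal

/-- truncated series of `1/(1+x) - 1` -/
def psi (M : ℕ) : Polynomial ℚ := ∑ i ∈ Finset.range (M+1), (-Polynomial.X)^(i+1)

lemma X_dvd_psi (M : ℕ) : (X : Polynomial ℚ) ∣ psi M := by
  refine Finset.dvd_sum ?_
  intro i _
  exact dvd_pow (dvd_neg.2 dvd_rfl) (Nat.succ_ne_zero i)

lemma one_add_psi (M : ℕ) : 1 + psi M = ∑ i ∈ Finset.range (M+2), (-X:Polynomial ℚ)^i := by
  rw [Finset.sum_range_succ' (fun i => (-X:Polynomial ℚ)^i) (M+1)]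
  simp [psi, add_comm]

lemma one_add_X_mul_one_add_psi (M : ℕ) :
    (1 + X) * (1 + psi M) = 1 - (-X:Polynomial ℚ)^(M+2) := by
  rw [one_add_psi]
  have hg := geom_sum_mul (-X:Polynomial ℚ) (M+2)
  calc (1 + X) * ∑ i ∈ Finset.range (M+2), (-X:Polynomial ℚ)^i
      = -((∑ i ∈ Finset.range (M+2), (-X:Polynomial ℚ)^i) * ((-X) - 1)) := by ring
    _ = -((-X:Polynomial ℚ)^(M+2) - 1) := by rw [hg]
    _ = 1 - (-X:Polynomial ℚ)^(M+2) := by ring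

lemma geom_mod {M : ℕ} {y : Polynomial ℚ} (hy : (X:Polynomial ℚ) ∣ y) :
    MD M ((1 + y) * (∑ i ∈ Finset.range M, (-y)^i)) 1 := by
  have hg := geom_sum_mul (-y) M
  have e : (1 + y) * (∑ i ∈ Finset.range M, (-y)^i) = 1 - (-y)^M := by
    calc (1 + y) * (∑ i ∈ Finset.range M, (-y)^i)
        = -((∑ i ∈ Finset.range M, (-y)^i) * ((-y) - 1)) := by ring
      _ = -((-y)^M - 1) := by rw [hg]
      _ = 1 - (-y)^M := by ring
  rw [e]
  unfold MD
  have e2 : (1 - (-y)^M) - 1 = -((-y)^M) := by ring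
  rw [e2]
  exact dvd_neg.2 (dvd_texp_term (dvd_neg.2 hy) le_rfl)

lemma derivative_tlog_term (P : Polynomial ℚ) (k : ℕ) :
    Polynomial.derivative ((((-1:ℚ)^k)/(k+1)) • (P-1)^(k+1))
      = (-(P-1))^k * Polynomial.derivative P := by
  rw [Polynomial.derivative_smul, Polynomial.derivative_pow]
  simp only [add_tsub_cancel_right, map_sub, Polynomial.derivative_one, sub_zero]
  rw [Polynomial.smul_eq_C_mul, ← mul_assoc, ← mul_assoc, ← Polynomial.C_mul]
  have hc : ((-1:ℚ)^k)/(k+1) * (((k+1:ℕ):ℚ)) = (-1:ℚ)^k := by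
    push_cast
    field_simp
  rw [hc]
  congr 1
  rw [map_pow, Polynomial.C_neg, Polynomial.C_1, ← neg_one_mul ((P:Polynomial ℚ) - 1), mul_pow]

/-- the universal identity `log(1+x) + log((1+x)⁻¹) ≡ 0`. -/
lemma univ_log_inv (M : ℕ) :
    (X:Polynomial ℚ)^(M+1) ∣ (tlog M (1 + X) + tlog M (1 + psi M)) := by
  set G : Polynomial ℚ := tlog M (1 + X) + tlog M (1 + psi M) with hG
  have hXG : (X:Polynomial ℚ) ∣ G := by
    refine dvd_add (Finset.dvd_sum ?_) (Finset.dvd_sum ?_) <;> intro k _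
    · refine dvd_smul2 _ ?_
      simpa using dvd_pow (dvd_refl (X:Polynomial ℚ)) (Nat.succ_ne_zero k)
    · refine dvd_smul2 _ ?_
      simpa using dvd_pow (X_dvd_psi M) (Nat.succ_ne_zero k)
  have hd : Polynomial.derivative G
      = (∑ k ∈ Finset.range M, (-X:Polynomial ℚ)^k)
        + (∑ k ∈ Finset.range M, (-psi M)^k) * Polynomial.derivative (psi M) := by
    rw [hG]
    unfold tlog
    rw [map_add, map_sum, map_sum, Finset.sum_mul]
    congr 1
    · refine Finset.sum_congr rfl ?_
      intro k _
      rw [derivative_tlog_term]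
      simp
    · refine Finset.sum_congr rfl ?_
      intro k _
      rw [derivative_tlog_term]
      simp
  -- psi' relation
  have hpsirel : (1 + psi M) + (1+X) * Polynomial.derivative (psi M)
      = Polynomial.C ((M+2 : ℕ):ℚ) * (-X:Polynomial ℚ)^(M+1) := by
    have h := congrArg Polynomial.derivative (one_add_X_mul_one_add_psi M)
    simp only [Polynomial.derivative_mul, map_add, map_sub, map_neg, Polynomial.derivative_one,
      Polynomial.derivative_X, Polynomial.derivative_pow, zero_add, one_mul, zero_sub,
      add_tsub_cancel_right, mul_neg, mul_one, neg_neg] at h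
    exact h
  have hA : MD M ((1+X) * (∑ k ∈ Finset.range M, (-X:Polynomial ℚ)^k)) 1 := geom_mod dvd_rfl
  have hB : MD M ((1+psi M) * (∑ k ∈ Finset.range M, (-psi M)^k)) 1 := geom_mod (X_dvd_psi M)
  have h3 : MD M ((1+X) * (1+psi M)) 1 := by
    unfold MD
    rw [one_add_X_mul_one_add_psi]
    have e : (1 - (-X:Polynomial ℚ)^(M+2)) - 1 = -((-X)^(M+2)) := by ring
    rw [e]
    exact dvd_neg.2 (dvd_texp_term (dvd_neg.2 dvd_rfl) (by omega))
  have h4 : MD M ((1+X) * Polynomial.derivative (psi M)) (-(1+psi M)) := by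
    unfold MD
    have e : (1+X) * Polynomial.derivative (psi M) - (-(1+psi M))
        = Polynomial.C ((M+2:ℕ):ℚ) * (-X:Polynomial ℚ)^(M+1) := by
      rw [← hpsirel]; ring
    rw [e]
    exact MD.dvd_mul_left' (dvd_texp_term (dvd_neg.2 dvd_rfl) (by omega))
  have hd0 : MD M (Polynomial.derivative G) 0 := by
    have base : MD M (((1+X)*(1+psi M)) * Polynomial.derivative G) (Polynomial.derivative G) := by
      have hh := h3.mul (MD.refl M (Polynomial.derivative G))
      rw [one_mul] at hh; exact hh
    refine MD.trans (MD.symm base) ?_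
    rw [hd]
    have e : ((1+X)*(1+psi M)) * ((∑ k ∈ Finset.range M, (-X:Polynomial ℚ)^k)
        + (∑ k ∈ Finset.range M, (-psi M)^k) * Polynomial.derivative (psi M))
      = (1+psi M)*((1+X)*(∑ k ∈ Finset.range M, (-X:Polynomial ℚ)^k))
        + ((1+psi M)*(∑ k ∈ Finset.range M, (-psi M)^k)) * ((1+X)*Polynomial.derivative (psi M)) := by
      ring
    rw [e]
    have c1 := (MD.refl M (1+psi M)).mul hA
    have c2 := hB.mul h4
    refine (c1.add c2).trans ?_
    rw [mul_one, one_mul]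
    have e2 : (1+psi M) + (-(1+psi M)) = (0:Polynomial ℚ) := by ring
    rw [e2]
    exact MD.refl _ _
  rw [Polynomial.X_pow_dvd_iff]
  intro d hd'
  match d, hd' with
  | 0, _ => exact (Polynomial.X_dvd_iff).1 hXG
  | (n+1), hd' =>
    have h0 : (Polynomial.derivative G).coeff n = 0 := by
      have := MD.coeff hd0 (by omega : n < M)
      simpa using this
    rw [Polynomial.coeff_derivative] at h0
    rcases mul_eq_zero.1 h0 with h | h
    · exact h
    · exfalso
      have : ((n:ℚ)+1) ≠ 0 := by positivity
      exact this h

lemma tlog_inv {R : Type*} [Ring R] [Algebra ℚ R] {M : ℕ} {p q : R[X]}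
    (hp : (X:R[X]) ∣ (p-1)) (hqp : MD (M+1) (q*p) 1) :
    MD (M+1) (tlog M p + tlog M q) 0 := by
  set u : R[X] := p - 1 with hu
  set s : R[X] := ∑ i ∈ Finset.range (M+1), (-u)^i with hs
  have hcomm : u * s = s * u := by
    rw [hs, Finset.mul_sum, Finset.sum_mul]
    refine Finset.sum_congr rfl fun i _ => ?_
    exact ((Commute.refl u).neg_right.pow_right i).eq
  have hgeom : MD (M+1) ((1+u) * s) 1 := by
    have hg := geom_sum_mul (-u) (M+1)
    have e : (1 + u) * s = 1 - (-u)^(M+1) := by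
      calc (1 + u) * s = s + u * s := by noncomm_ring
        _ = s + s * u := by rw [hcomm]
        _ = -(s * ((-u) - 1)) := by noncomm_ring
        _ = -((-u)^(M+1) - 1) := by rw [hs, hg]
        _ = 1 - (-u)^(M+1) := by noncomm_ring
    rw [e]
    unfold MD
    have e2 : (1 - (-u)^(M+1)) - 1 = -((-u)^(M+1)) := by noncomm_ring
    rw [e2]
    exact dvd_neg.2 (dvd_texp_term (dvd_neg.2 hp) le_rfl)
  -- v ≡ (-u) * s
  have hv : MD (M+1) (q - 1) ((-u) * s) := by
    have s1 : MD (M+1) (q - 1) ((q-1) * ((1+u)*s)) := by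
      have hh := (MD.refl (M+1) (q-1)).mul (MD.symm hgeom)
      rw [mul_one] at hh; exact hh
    refine s1.trans ?_
    have e : (q-1) * ((1+u)*s) = (q * p - p) * s := by rw [hu]; noncomm_ring
    rw [e]
    have s2 : MD (M+1) (q * p - p) (1 - p) := by
      unfold MD
      have e2 : (q*p - p) - (1 - p) = q*p - 1 := by noncomm_ring
      rw [e2]; exact hqp
    refine (s2.mul (MD.refl (M+1) s)).trans ?_
    have e3 : (1 - p) * s = (-u) * s := by rw [hu]; noncomm_ring
    rw [e3]
    exact MD.refl _ _
  -- aeval transfer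
  have haeval : Polynomial.aeval u (tlog M (1 + X) + tlog M (1 + psi M))
      = tlog M p + tlog M (1 + (-u) * s) := by
    have h1 : Polynomial.aeval u (tlog M (1+X) : Polynomial ℚ) = tlog M (1 + u) := by
      unfold tlog
      rw [map_sum]
      refine Finset.sum_congr rfl ?_
      intro k _
      rw [map_smul, map_pow, map_sub, map_add, map_one, Polynomial.aeval_X]
    have h2 : Polynomial.aeval u (tlog M (1 + psi M) : Polynomial ℚ)
        = tlog M (1 + (-u) * s) := by
      unfold tlog
      rw [map_sum]
      refine Finset.sum_congr rfl ?_
      intro k _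
      rw [map_smul, map_pow, map_sub, map_add, map_one]
      have : Polynomial.aeval u (psi M) = (-u) * s := by
        unfold psi
        rw [map_sum, hs, Finset.mul_sum]
        refine Finset.sum_congr rfl ?_
        intro i _
        rw [map_pow, map_neg, Polynomial.aeval_X, pow_succ']
      rw [this]
    rw [map_add, h1, h2, hu]
    simp
  have hdvd : (X:R[X])^(M+1) ∣ (tlog M p + tlog M (1 + (-u) * s)) := by
    rw [← haeval]
    obtain ⟨c, hc⟩ := univ_log_inv M
    rw [hc, map_mul, map_pow, Polynomial.aeval_X]
    exact (dvd_texp_term hp le_rfl).trans (Dvd.intro _ rfl)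
  -- conclude
  have hq1 : MD (M+1) q (1 + (-u)*s) := by
    have e : q = 1 + (q - 1) := by noncomm_ring
    rw [e]
    exact (MD.refl (M+1) 1).add hv
  have := (MD.refl (M+1) (tlog M p)).add (tlog_congr (N := M) hq1)
  refine this.trans ?_
  unfold MD
  rw [sub_zero]
  exact hdvd

end Universal


section SignFlip
variable {R : Type*} [Ring R] [Algebra ℚ R]

def AFlip : R[X] →+* R[X] :=
  Polynomial.eval₂RingHom' (Polynomial.C : R →+* R[X]) (-X)
    (fun a => ((Polynomial.commute_X (Polynomial.C a)).symm).neg_right)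

lemma AFlip_C (a : R) : AFlip (Polynomial.C a : R[X]) = Polynomial.C a :=
  Polynomial.eval₂_C _ _

lemma AFlip_X : AFlip (X : R[X]) = -X := Polynomial.eval₂_X _ _

lemma AFlip_smul (c : ℚ) (p : R[X]) : AFlip (c • p) = c • AFlip p := by
  simp only [Algebra.smul_def, Polynomial.algebraMap_apply, map_mul, AFlip_C]

lemma AFlip_coeff (p : R[X]) (d : ℕ) :
    (AFlip p).coeff d = ((-1:ℚ))^d • p.coeff d := by
  induction p using Polynomial.induction_on' with
  | add p q hp hq => simp only [map_add, Polynomial.coeff_add, hp, hq, smul_add]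
  | monomial n a =>
      have h1 : AFlip (Polynomial.monomial n a) = ((-1:ℚ)^n) • (Polynomial.monomial n a : R[X]) := by
        rw [← Polynomial.C_mul_X_pow_eq_monomial, map_mul, map_pow, AFlip_C, AFlip_X]
        rw [show (-X : R[X]) = (-1:ℚ) • X by rw [neg_smul, one_smul]]
        rw [_root_.smul_pow, mul_smul_comm]
      rw [h1, Polynomial.coeff_smul]
      by_cases hdn : d = n
      · subst hdn; rfl
      · rw [Polynomial.coeff_monomial, if_neg (fun h => hdn h.symm), smul_zero, smul_zero]

lemma AFlip_texp (N : ℕ) (a : R[X]) : AFlip (texp N a) = texp N (AFlip a) := by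
  unfold texp
  rw [map_sum]
  exact Finset.sum_congr rfl fun n _ => by rw [AFlip_smul, map_pow]

lemma AFlip_tlog (N : ℕ) (p : R[X]) : AFlip (tlog N p) = tlog N (AFlip p) := by
  unfold tlog
  rw [map_sum]
  exact Finset.sum_congr rfl fun k _ => by rw [AFlip_smul, map_pow, map_sub, map_one]

lemma mul_sub_one_dvd {p q : R[X]} (hp : (X:R[X]) ∣ (p - 1)) (hq : (X:R[X]) ∣ (q - 1)) :
    (X:R[X]) ∣ (p * q - 1) := by
  have e : p * q - 1 = p * (q - 1) + (p - 1) := by noncomm_ring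
  rw [e]
  have h1 : (X:R[X])^1 ∣ p * (q - 1) := MD.dvd_mul_left' (by rw [pow_one]; exact hq)
  rw [pow_one] at h1
  exact dvd_add h1 hp
end SignFlip

section WEven

lemma gX_def : gX = Polynomial.C Xg * Polynomial.X := rfl
lemma gY_def : gY = Polynomial.C Yg * Polynomial.X := rfl

lemma X_dvd_gX : (X : Polynomial FA) ∣ gX := ⟨Polynomial.C Xg, by rw [gX_def, X_mul]⟩
lemma X_dvd_gY : (X : Polynomial FA) ∣ gY := ⟨Polynomial.C Yg, by rw [gY_def, X_mul]⟩

lemma X_dvd_smul_gX (c : ℚ) : (X : Polynomial FA) ∣ c • gX := dvd_smul2 c X_dvd_gX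

lemma AFlip_gX : AFlip gX = -gX := by
  rw [gX_def, map_mul, AFlip_C, AFlip_X, mul_neg]

lemma AFlip_gY : AFlip gY = -gY := by
  rw [gY_def, map_mul, AFlip_C, AFlip_X, mul_neg]

lemma Wc_even (m : ℕ) (hm : m % 2 = 0) : Wc m = 0 := by
  classical
  set a : Polynomial FA := (1/2 : ℚ) • gX with ha
  set G1 : Polynomial FA := texp m a with hG1
  set E : Polynomial FA := texp m gY with hE
  set A1 : Polynomial FA := texp m (-a) with hA1
  set B1 : Polynomial FA := texp m (-gY) with hB1
  set Q : Polynomial FA := G1 * E * G1 with hQ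
  have hXa : (X : Polynomial FA) ∣ a := X_dvd_smul_gX _
  have hQ1 : (X : Polynomial FA) ∣ (Q - 1) := by
    rw [hQ]
    exact mul_sub_one_dvd (mul_sub_one_dvd (texp_sub_one_dvd hXa m) (texp_sub_one_dvd X_dvd_gY m))
      (texp_sub_one_dvd hXa m)
  have c1 : MD (m+1) (A1 * G1) 1 := by
    have h := texp_inv (N := m) (a := -a) (dvd_neg.2 hXa)
    rw [neg_neg] at h
    exact h
  have c2 : MD (m+1) (B1 * E) 1 := by
    have h := texp_inv (N := m) (a := -gY) (dvd_neg.2 X_dvd_gY)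
    rw [neg_neg] at h
    exact h
  have hAQ : AFlip Q = A1 * B1 * A1 := by
    rw [hQ, map_mul, map_mul, hG1, hE, AFlip_texp, AFlip_texp, ha, AFlip_smul, AFlip_gX,
      AFlip_gY, smul_neg, ← ha]
  have hqp : MD (m+1) (AFlip Q * Q) 1 := by
    rw [hAQ, hQ]
    have e1 : A1 * B1 * A1 * (G1 * E * G1) = (A1 * B1) * (A1 * G1) * (E * G1) := by
      noncomm_ring
    rw [e1]
    have s1 := ((MD.refl (m+1) (A1 * B1)).mul c1).mul (MD.refl (m+1) (E * G1))
    refine s1.trans ?_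
    have e2 : (A1 * B1) * 1 * (E * G1) = A1 * (B1 * E) * G1 := by noncomm_ring
    rw [e2]
    have s2 := ((MD.refl (m+1) A1).mul c2).mul (MD.refl (m+1) G1)
    refine s2.trans ?_
    have e3 : A1 * 1 * G1 = A1 * G1 := by noncomm_ring
    rw [e3]
    exact c1
  have hinv := tlog_inv (M := m) hQ1 hqp
  have hcoeff := MD.coeff hinv (Nat.lt_succ_self m)
  rw [Polynomial.coeff_add] at hcoeff
  simp only [Polynomial.coeff_zero] at hcoeff
  have hW : (tlog m Q).coeff m = Wc m := by rw [Wc, hQ, hG1, hE, ha]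
  have hWn : (tlog m (AFlip Q)).coeff m = Wc m := by
    rw [← AFlip_tlog, AFlip_coeff, hW]
    have hone : (-1:ℚ)^m = 1 := Even.neg_one_pow (Nat.even_iff.2 hm)
    rw [hone, one_smul]
  rw [hW, hWn] at hcoeff
  have h2 : (2:ℚ) • Wc m = 0 := by rw [two_smul]; exact hcoeff
  exact (smul_eq_zero.1 h2).resolve_left (by norm_num)

end WEven


section AdPow

lemma adpow (a w : FA) (k : ℕ) :
    (fun v => ⁅a, v⁆)^[k] w
      = ∑ i ∈ Finset.range (k+1),
          ((-1:ℚ)^(k-i) * (k.choose i : ℚ)) • (a^i * w * a^(k-i)) := by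
  set l : Module.End ℚ FA := LinearMap.mulLeft ℚ a with hl
  set r : Module.End ℚ FA := LinearMap.mulRight ℚ a with hr
  have hfun : (fun v => ⁅a, v⁆) = ⇑(l - r) := by
    funext v
    simp [hl, hr, Ring.lie_def]
  have hcomm : Commute l (-r) := by
    refine Commute.neg_right (R := Module.End ℚ FA) ?_
    ext v
    simp [hl, hr, Module.End.mul_apply, mul_assoc]
  rw [hfun, ← Module.End.pow_apply]
  have hsub : l - r = l + (-r) := sub_eq_add_neg l r
  rw [hsub, hcomm.add_pow k]
  rw [LinearMap.sum_apply]
  refine Finset.sum_congr rfl ?_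
  intro i _
  have hneg : (-r)^(k-i) = ((-1:ℚ)^(k-i)) • r^(k-i) := by
    rw [show -r = (-1:ℚ) • r from (neg_one_smul ℚ r).symm, _root_.smul_pow]
  rw [Module.End.mul_apply, Module.End.mul_apply, Module.End.natCast_apply, hneg]
  rw [LinearMap.smul_apply, hl, hr, LinearMap.pow_mulLeft, LinearMap.pow_mulRight,
    ← Nat.cast_smul_eq_nsmul ℚ, map_smul, map_smul, LinearMap.mulRight_apply,
    LinearMap.mulLeft_apply]
  rw [mul_smul_comm, smul_smul, mul_assoc]

end AdPow

section ConjCoeff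

lemma gX_pow (i : ℕ) : gX ^ i = Polynomial.C (Xg^i) * (X:Polynomial FA)^i := by
  rw [gX_def, Commute.mul_pow (Polynomial.commute_X (Polynomial.C Xg)).symm, Polynomial.C_pow]

lemma texp_smul_gX_eq (m : ℕ) (c : ℚ) :
    texp m (c • gX) = ∑ i ∈ Finset.range (m+1),
      ((i.factorial:ℚ)⁻¹ * c^i) • (Polynomial.C (Xg^i) * (X:Polynomial FA)^i) := by
  unfold texp
  refine Finset.sum_congr rfl fun i _ => ?_
  rw [_root_.smul_pow, gX_pow, smul_smul]

lemma conj_coeff (m : ℕ) (w : Polynomial FA) :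
    (texp m ((1/2:ℚ) • gX) * w * texp m (-((1/2:ℚ) • gX))).coeff m
      = ∑ k ∈ Finset.range (m+1),
          (((k.factorial:ℚ) * 2^k)⁻¹) • ((fun v => ⁅Xg, v⁆)^[k] (w.coeff (m-k))) := by
  have hneg : -((1/2:ℚ) • gX) = ((-(1/2):ℚ)) • gX := by rw [neg_smul]
  have hpoly : texp m ((1/2:ℚ) • gX) * w * texp m (-((1/2:ℚ) • gX))
      = ∑ i ∈ Finset.range (m+1), ∑ j ∈ Finset.range (m+1),
          (((i.factorial:ℚ)⁻¹ * (1/2)^i) * ((j.factorial:ℚ)⁻¹ * (-(1/2))^j)) •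
            (Polynomial.C (Xg^i) * w * Polynomial.C (Xg^j) * (X:Polynomial FA)^(i+j)) := by
    rw [hneg, texp_smul_gX_eq, texp_smul_gX_eq, Finset.sum_mul, Finset.sum_mul_sum]
    refine Finset.sum_congr rfl fun i _ => Finset.sum_congr rfl fun j _ => ?_
    rw [smul_mul_assoc, smul_mul_assoc, mul_smul_comm, smul_smul]
    congr 1
    rw [pow_add]
    calc Polynomial.C (Xg^i) * X^i * w * (Polynomial.C (Xg^j) * X^j)
        = Polynomial.C (Xg^i) * ((X:Polynomial FA)^i * (w * Polynomial.C (Xg^j))) * X^j := by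
          noncomm_ring
      _ = Polynomial.C (Xg^i) * ((w * Polynomial.C (Xg^j)) * (X:Polynomial FA)^i) * X^j := by
          rw [X_pow_mul]
      _ = Polynomial.C (Xg^i) * w * Polynomial.C (Xg^j) * ((X:Polynomial FA)^i * X^j) := by
          noncomm_ring
  rw [hpoly]
  rw [Polynomial.finset_sum_coeff]
  have e1 : ∀ i ∈ Finset.range (m+1),
      (∑ j ∈ Finset.range (m+1),
          (((i.factorial:ℚ)⁻¹ * (1/2)^i) * ((j.factorial:ℚ)⁻¹ * (-(1/2))^j)) •
            (Polynomial.C (Xg^i) * w * Polynomial.C (Xg^j) * (X:Polynomial FA)^(i+j))).coeff m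
      = ∑ j ∈ Finset.range (m+1),
          (if i + j ≤ m then
            (((i.factorial:ℚ)⁻¹ * (1/2)^i) * ((j.factorial:ℚ)⁻¹ * (-(1/2))^j)) •
              (Xg^i * w.coeff (m - (i+j)) * Xg^j)
          else 0) := by
    intro i _
    rw [Polynomial.finset_sum_coeff]
    refine Finset.sum_congr rfl fun j _ => ?_
    rw [Polynomial.coeff_smul, Polynomial.coeff_mul_X_pow', Polynomial.coeff_mul_C,
      Polynomial.coeff_C_mul]
    by_cases hij : i + j ≤ m
    · rw [if_pos hij, if_pos hij]
    · rw [if_neg hij, if_neg hij, smul_zero]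
  rw [Finset.sum_congr rfl e1]
  rw [← Finset.sum_product']
  rw [← Finset.sum_filter]
  rw [← sum_range_antidiagonal m (fun i j =>
      (((i.factorial:ℚ)⁻¹ * (1/2)^i) * ((j.factorial:ℚ)⁻¹ * (-(1/2))^j)) •
        (Xg^i * w.coeff (m - (i+j)) * Xg^j))]
  refine Finset.sum_congr rfl fun k hk => ?_
  rw [Finset.mem_range] at hk
  rw [Finset.Nat.sum_antidiagonal_eq_sum_range_succ (fun i j =>
      (((i.factorial:ℚ)⁻¹ * (1/2)^i) * ((j.factorial:ℚ)⁻¹ * (-(1/2))^j)) •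
        (Xg^i * w.coeff (m - (i+j)) * Xg^j)) k]
  rw [adpow Xg (w.coeff (m-k)) k, Finset.smul_sum]
  refine Finset.sum_congr rfl fun i hi => ?_
  rw [Finset.mem_range, Nat.lt_succ_iff] at hi
  obtain ⟨j, rfl⟩ : ∃ j, k = i + j := ⟨k - i, (Nat.add_sub_cancel' hi).symm⟩
  rw [Nat.add_sub_cancel_left]
  rw [smul_smul]
  congr 1
  · have hfi : ((i.factorial : ℚ)) ≠ 0 := Nat.cast_ne_zero.2 (Nat.factorial_ne_zero i)
    have hfj : ((j.factorial : ℚ)) ≠ 0 := Nat.cast_ne_zero.2 (Nat.factorial_ne_zero j)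
    have hfij : (((i+j).factorial : ℚ)) ≠ 0 := Nat.cast_ne_zero.2 (Nat.factorial_ne_zero _)
    rw [Nat.cast_choose ℚ (Nat.le_add_right i j)]
    rw [Nat.add_sub_cancel_left]
    rw [neg_pow ((1/2:ℚ)) j, pow_add]
    field_simp
    rw [mul_right_comm ((1/2:ℚ)^i), ← mul_pow, mul_assoc, ← mul_pow]; norm_num
end ConjCoeff

section Key

lemma X_dvd_texp3_sub_one (m N : ℕ) :
    (X : Polynomial FA) ∣ (texp N ((1/2:ℚ) • gX) * texp N gY * texp N ((1/2:ℚ) • gX) - 1) :=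
  mul_sub_one_dvd (mul_sub_one_dvd (texp_sub_one_dvd (X_dvd_smul_gX _) N)
    (texp_sub_one_dvd X_dvd_gY N)) (texp_sub_one_dvd (X_dvd_smul_gX _) N)

/-- stability : the degree-`d` coefficient of `tlog m Q_m` is `Wc d` for `d ≤ m`. -/
lemma tlogQ_coeff {m d : ℕ} (hd : d ≤ m) :
    (tlog m (texp m ((1/2:ℚ) • gX) * texp m gY * texp m ((1/2:ℚ) • gX))).coeff d = Wc d := by
  have h1 : MD (d+1) (texp m ((1/2:ℚ) • gX)) (texp d ((1/2:ℚ) • gX)) :=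
    texp_stable (X_dvd_smul_gX _) hd
  have h2 : MD (d+1) (texp m gY) (texp d gY) := texp_stable X_dvd_gY hd
  have hQ : MD (d+1) (texp m ((1/2:ℚ) • gX) * texp m gY * texp m ((1/2:ℚ) • gX))
      (texp d ((1/2:ℚ) • gX) * texp d gY * texp d ((1/2:ℚ) • gX)) := (h1.mul h2).mul h1
  have h3 := tlog_congr (N := m) hQ
  have h4 := tlog_stable (X_dvd_texp3_sub_one d d) hd
  have := (h3.trans h4).coeff (Nat.lt_succ_self d)
  rw [this]
  rfl

lemma Zc_eq (m : ℕ) :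
    Zc m = ∑ k ∈ Finset.range (m+1),
        (((k.factorial:ℚ) * 2^k)⁻¹) • ((fun v => ⁅Xg, v⁆)^[k] (Wc (m-k))) := by
  classical
  set a : Polynomial FA := (1/2:ℚ) • gX with ha
  set g : Polynomial FA := texp m a with hgdef
  set h : Polynomial FA := texp m (-a) with hhdef
  set E : Polynomial FA := texp m gY with hE
  set Q : Polynomial FA := g * E * g with hQdef
  set P : Polynomial FA := texp m gX * texp m gY with hPdef
  have hXa : (X : Polynomial FA) ∣ a := X_dvd_smul_gX _
  have hgh : MD (m+1) (g * h) 1 := texp_inv hXa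
  have hhg : MD (m+1) (h * g) 1 := by
    have hh := texp_inv (N := m) (a := -a) (dvd_neg.2 hXa)
    rw [neg_neg] at hh
    exact hh
  have hgg : MD (m+1) (g * g) (texp m gX) := by
    have hh := texp_mul (N := m) (Commute.refl a) hXa hXa
    have e : a + a = gX := by
      rw [ha, ← add_smul]
      norm_num
    rw [e] at hh
    exact hh
  have hP : MD (m+1) (g * Q * h) P := by
    have e : g * Q * h = (g * g) * E * (g * h) := by rw [hQdef]; noncomm_ring
    rw [e, hPdef, hE]
    have := (hgg.mul (MD.refl (m+1) E)).mul hgh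
    refine this.trans ?_
    rw [mul_one]
    exact MD.refl _ _
  have hZ : Zc m = (g * tlog m Q * h).coeff m := by
    have s1 : MD (m+1) (tlog m P) (tlog m (g * Q * h)) := tlog_congr (MD.symm hP)
    have s2 : MD (m+1) (tlog m (g * Q * h)) (g * tlog m Q * h) := tlog_conj hgh hhg
    have := (s1.trans s2).coeff (Nat.lt_succ_self m)
    rw [Zc, ← hPdef, this]
  rw [hZ, hgdef, hhdef, ha, conj_coeff]
  refine Finset.sum_congr rfl fun k hk => ?_
  rw [Finset.mem_range, Nat.lt_succ_iff] at hk
  rw [hQdef, hgdef, hE, ha, tlogQ_coeff (Nat.sub_le m k)]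

end Key

section Final

lemma sum_range_two_mul {β : Type*} [AddCommMonoid β] (n : ℕ) (f : ℕ → β) :
    ∑ k ∈ Finset.range (2*n), f k
      = ∑ j ∈ Finset.range n, f (2*j) + ∑ j ∈ Finset.range n, f (2*j+1) := by
  induction n with
  | zero => simp
  | succ n ih =>
      have h2 : 2*(n+1) = 2*n+1+1 := by ring
      rw [h2, Finset.sum_range_succ, Finset.sum_range_succ, ih,
        Finset.sum_range_succ, Finset.sum_range_succ]
      abel

lemma ad_iter_zero (k : ℕ) : (fun v => ⁅Xg, v⁆)^[k] (0:FA) = 0 := by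
  induction k with
  | zero => rfl
  | succ k ih => rw [Function.iterate_succ_apply, show ⁅Xg, (0:FA)⁆ = 0 by simp [Ring.lie_def]]; exact ih

lemma Icc_sum_eq {β : Type*} [AddCommMonoid β] (p : ℕ) (F : ℕ → β) :
    ∑ j ∈ Finset.Icc 1 p, F j = ∑ j ∈ Finset.range p, F (1+j) := by
  rw [show Finset.Icc 1 p = Finset.Ico 1 (p+1) by rw [Finset.Ico_add_one_right_eq_Icc]]
  rw [Finset.sum_Ico_eq_sum_range]
  simp

theorem bch_components_from_symmetric_bch' :
    ∀ p : ℕ, 1 ≤ p →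
      (Zc (2 * p + 1)
          = Wc (2 * p + 1)
            + ∑ j ∈ Finset.Icc 1 p,
                ((((2 * j).factorial : ℚ) * 2 ^ (2 * j))⁻¹) •
                  ((fun v => ⁅Xg, v⁆)^[2 * j] (Wc (2 * p - 2 * j + 1))))
      ∧ (Zc (2 * p)
          = ∑ j ∈ Finset.Icc 1 p,
              ((((2 * j - 1).factorial : ℚ) * 2 ^ (2 * j - 1))⁻¹) •
                ((fun v => ⁅Xg, v⁆)^[2 * j - 1] (Wc (2 * p - 2 * j + 1)))) := by
  intro p hp
  constructor
  · have h := Zc_eq (2*p+1)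
    rw [show 2*p+1+1 = 2*(p+1) by ring, sum_range_two_mul] at h
    have hodd : ∀ j ∈ Finset.range (p+1),
        (((2*j+1).factorial:ℚ) * 2^(2*j+1))⁻¹ •
          ((fun v => ⁅Xg, v⁆)^[2*j+1] (Wc (2*p+1 - (2*j+1)))) = 0 := by
      intro j hj
      rw [Finset.mem_range, Nat.lt_succ_iff] at hj
      rw [Wc_even _ (by omega), ad_iter_zero, smul_zero]
    rw [Finset.sum_congr rfl hodd, Finset.sum_const_zero, add_zero,
      Finset.sum_range_succ'] at h
    have hg0 : (((2*0).factorial:ℚ) * 2^(2*0))⁻¹ •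
        ((fun v => ⁅Xg, v⁆)^[2*0] (Wc (2*p+1 - 2*0))) = Wc (2*p+1) := by
      norm_num
    rw [hg0] at h
    rw [h, Icc_sum_eq, add_comm]
    congr 1
    refine Finset.sum_congr rfl fun j hj => ?_
    rw [Finset.mem_range] at hj
    have e1 : 2*(j+1) = 2*(1+j) := by ring
    rw [e1]
    have e2 : 2*p+1 - 2*(1+j) = 2*p - 2*(1+j) + 1 := by omega
    rw [e2]
  · have h := Zc_eq (2*p)
    rw [Finset.sum_range_succ, sum_range_two_mul] at h
    have hlast : (((2*p).factorial:ℚ) * 2^(2*p))⁻¹ •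
        ((fun v => ⁅Xg, v⁆)^[2*p] (Wc (2*p - 2*p))) = 0 := by
      rw [Nat.sub_self, Wc_even 0 rfl, ad_iter_zero, smul_zero]
    have heven : ∀ j ∈ Finset.range p,
        (((2*j).factorial:ℚ) * 2^(2*j))⁻¹ •
          ((fun v => ⁅Xg, v⁆)^[2*j] (Wc (2*p - 2*j))) = 0 := by
      intro j hj
      rw [Finset.mem_range] at hj
      rw [Wc_even _ (by omega), ad_iter_zero, smul_zero]
    rw [hlast, add_zero, Finset.sum_congr rfl heven, Finset.sum_const_zero, zero_add] at h
    rw [h, Icc_sum_eq]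
    refine Finset.sum_congr rfl fun j hj => ?_
    rw [Finset.mem_range] at hj
    have e1 : 2*j+1 = 2*(1+j) - 1 := by omega
    rw [e1]
    have e2 : 2*p - (2*(1+j) - 1) = 2*p - 2*(1+j) + 1 := by omega
    rw [e2]

end Final

/-- for every `p ≥ 1`,
`Z_{2p+1} = W_{2p+1} + ∑_{j=1}^{p} (1/((2j)! 2^{2j})) ad_X^{2j} W_{2p−2j+1}` and
`Z_{2p} = ∑_{j=1}^{p} (1/((2j−1)! 2^{2j−1})) ad_X^{2j−1} W_{2p−2j+1}`. -/
theorem bch_components_from_symmetric_bch :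
    ∀ p : ℕ, 1 ≤ p →
      (Zc (2 * p + 1)
          = Wc (2 * p + 1)
            + ∑ j ∈ Finset.Icc 1 p,
                ((((2 * j).factorial : ℚ) * 2 ^ (2 * j))⁻¹) •
                  ((fun v => ⁅Xg, v⁆)^[2 * j] (Wc (2 * p - 2 * j + 1))))
      ∧ (Zc (2 * p)
          = ∑ j ∈ Finset.Icc 1 p,
              ((((2 * j - 1).factorial : ℚ) * 2 ^ (2 * j - 1))⁻¹) •
                ((fun v => ⁅Xg, v⁆)^[2 * j - 1] (Wc (2 * p - 2 * j + 1)))) :=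
  bch_components_from_symmetric_bch'
end
end
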